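/- Let m ≥ 2 be even and N ≥ 1, and let γ = (1,2,…,m) ∈ S_m be the full cycle (the case r = 1). Let D₁,…,D_m be arbitrary complex N×N matrices and let τ be any pairing of {1,…,m}. Then | Σ_ψ Π_{l=1}^m (D_l)_{ψ(−l), ψ(γ(l))} | ≤ N^{m/2 + 1} · Π_{k=1}^m ‖D_k‖, where the sum runs over all functions ψ : ±[m] → {1,…,N} satisfying ψ(u) = ψ(−v) and ψ(v) = ψ(−u) for every block {u,v} of τ, and ‖·‖ denotes the operator norm. -/

import Mathlib

open MeasureTheory ProbabilityTheory Filter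
open scoped ENNReal NNReal Matrix

noncomputable section

namespace RMT

/-- The operator norm (ℓ² → ℓ²) of a complex square matrix. -/
noncomputable def opNorm {N : ℕ} (A : Matrix (Fin N) (Fin N) ℂ) : ℝ :=
  ‖(Matrix.toEuclideanCLM (𝕜 := ℂ) (n := Fin N)) A‖

/-- The entrywise absolute value of a complex matrix. -/
def absMatrix {N : ℕ} (A : Matrix (Fin N) (Fin N) ℂ) : Matrix (Fin N) (Fin N) ℂ :=
  fun u v => (‖A u v‖ : ℂ)

/-- The joint cumulant of the family `(Y i)_{i ∈ s}` with respect to `μ`: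
`K(Y) = ∑_{π partition of s} (-1)^{#π-1} (#π-1)! ∏_{B ∈ π} E[∏_{i ∈ B} Y i]`. -/
noncomputable def jointCumulantOn {Ω : Type*} [MeasurableSpace Ω] (μ : Measure Ω)
    {α : Type*} [DecidableEq α] (s : Finset α) (Y : α → Ω → ℂ) : ℂ :=
  ∑ π : Finpartition s,
    (-1 : ℂ) ^ (π.parts.card - 1) * (Nat.factorial (π.parts.card - 1) : ℂ) *
      ∏ B ∈ π.parts, ∫ ω, (∏ i ∈ B, Y i ω) ∂μ

/-- The joint cumulant `K_n(Y 0, …, Y (n-1))`. -/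
noncomputable def jointCumulant {Ω : Type*} [MeasurableSpace Ω] (μ : Measure Ω)
    (n : ℕ) (Y : Fin n → Ω → ℂ) : ℂ :=
  jointCumulantOn μ (Finset.univ : Finset (Fin n)) Y

/-- `z` or its complex conjugate, according to a Boolean sign. -/
def εapply (z : ℂ) (e : Bool) : ℂ := if e then z else (starRingEnd ℂ) z

/-- The standard complex Gaussian `a + i b` with `a, b` independent real `N(0,1/2)`. -/
noncomputable def stdCGaussian : Measure ℂ :=
  ((gaussianReal 0 (1/2)).prod (gaussianReal 0 (1/2))).map
    (fun p : ℝ × ℝ => (p.1 : ℂ) + (p.2 : ℂ) * Complex.I)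

/-- A configuration: a probability space carrying a family of `N × N` random matrices
`(X p)_{p ∈ I}` together with deterministic matrices `(D j)_{j ∈ J}`. -/
structure Config (I J : Type*) (N : ℕ) where
  Ω : Type
  mΩ : MeasurableSpace Ω
  μ : @Measure Ω mΩ
  prob : @IsProbabilityMeasure Ω mΩ μ
  X : I → Ω → Matrix (Fin N) (Fin N) ℂ
  D : J → Matrix (Fin N) (Fin N) ℂ

attribute [instance] Config.mΩ Config.prob

variable {I J : Type*} {N : ℕ}

/-- The unnormalized matrix entry `x_{ab} = √N · (X_p)_{ab}`. -/
noncomputable def Config.entry (cfg : Config I J N) (p : I) (a b : Fin N) (ω : cfg.Ω) : ℂ :=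
  (Real.sqrt N : ℂ) * cfg.X p ω a b

/-- `(X p)_{p ∈ I}` is a collection of independent GUE matrices. -/
def Config.IsGUE (cfg : Config I J N) : Prop :=
  (∀ p a b, Measurable fun ω => cfg.X p ω a b) ∧
  (∀ p ω, (cfg.X p ω)ᴴ = cfg.X p ω) ∧
  iIndepFun
    (fun q : I × {ab : Fin N × Fin N // ab.1 ≤ ab.2} =>
      cfg.entry q.1 q.2.1.1 q.2.1.2) cfg.μ ∧
  (∀ p (a b : Fin N), a < b → Measure.map (cfg.entry p a b) cfg.μ = stdCGaussian) ∧
  (∀ p (a : Fin N), Measure.map (cfg.entry p a a) cfg.μ =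
      (gaussianReal 0 1).map (fun x : ℝ => (x : ℂ)))

/-- `(X p)_{p ∈ I}` is a collection of independent GOE matrices. -/
def Config.IsGOE (cfg : Config I J N) : Prop :=
  (∀ p a b, Measurable fun ω => cfg.X p ω a b) ∧
  (∀ p ω a b, (cfg.X p ω a b).im = 0) ∧
  (∀ p ω, (cfg.X p ω)ᵀ = cfg.X p ω) ∧
  iIndepFun
    (fun q : I × {ab : Fin N × Fin N // ab.1 ≤ ab.2} =>
      fun ω => (cfg.entry q.1 q.2.1.1 q.2.1.2 ω).re) cfg.μ ∧
  (∀ p (a b : Fin N), a < b →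
      Measure.map (fun ω => (cfg.entry p a b ω).re) cfg.μ = gaussianReal 0 1) ∧
  (∀ p (a : Fin N), Measure.map (fun ω => (cfg.entry p a a ω).re) cfg.μ = gaussianReal 0 2)

/-- `(X p)_{p ∈ I}` is a collection of independent Wigner matrices with cumulant constant `C`. -/
def Config.IsWigner (cfg : Config I J N) (C : ℝ) : Prop :=
  (∀ p a b, Measurable fun ω => cfg.X p ω a b) ∧
  (∀ p ω, (cfg.X p ω)ᴴ = cfg.X p ω) ∧
  iIndepFun
    (fun q : I × {ab : Fin N × Fin N // ab.1 ≤ ab.2} =>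
      cfg.entry q.1 q.2.1.1 q.2.1.2) cfg.μ ∧
  (∀ p a b, ∫ ω, cfg.entry p a b ω ∂cfg.μ = 0) ∧
  (∀ p a b, a ≠ b → ∫ ω, ‖cfg.entry p a b ω‖ ^ 2 ∂cfg.μ = 1) ∧
  (∀ p (a b a' b' : Fin N), a < b → a' < b' →
      Measure.map (cfg.entry p a b) cfg.μ = Measure.map (cfg.entry p a' b') cfg.μ) ∧
  (∀ p (a b : Fin N), a < b → ∀ (n : ℕ) (ε : Fin (2 * n + 1) → Bool),
      jointCumulant cfg.μ (2 * n + 1) (fun k ω => εapply (cfg.entry p a b ω) (ε k)) = 0) ∧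
  (∀ p ω a, (cfg.X p ω a a).im = 0) ∧
  (∀ p (a a' : Fin N),
      Measure.map (cfg.entry p a a) cfg.μ = Measure.map (cfg.entry p a' a') cfg.μ) ∧
  (∀ p (a : Fin N) (n : ℕ),
      jointCumulant cfg.μ (2 * n + 1) (fun _ ω => cfg.entry p a a ω) = 0) ∧
  (∀ p (a b : Fin N) (s : ℕ), 0 < s → ∀ ε : Fin s → Bool,
      ‖jointCumulant cfg.μ s (fun k ω => εapply (cfg.entry p a b ω) (ε k))‖ ≤
        C * Nat.factorial s)

/-- The random matrix polynomial
`P(X, D) = ∑_{k<t} X_{i k 0} D_{j k 0} ⋯ X_{i k (m k - 1)} D_{j k (m k - 1)}`. -/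
noncomputable def Config.polyM (cfg : Config I J N) {t : ℕ} (m : Fin t → ℕ)
    (i : Fin t → ℕ → I) (j : Fin t → ℕ → J) (ω : cfg.Ω) : Matrix (Fin N) (Fin N) ℂ :=
  ∑ k : Fin t, ((List.range (m k)).map (fun u => cfg.X (i k u) ω * cfg.D (j k u))).prod

/-- `Tr P(X, D)` as a random variable. -/
noncomputable def Config.traceP (cfg : Config I J N) {t : ℕ} (m : Fin t → ℕ)
    (i : Fin t → ℕ → I) (j : Fin t → ℕ → J) (ω : cfg.Ω) : ℂ :=
  Matrix.trace (cfg.polyM m i j ω)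

/-- `E Tr P(X, D)`. -/
noncomputable def Config.meanT (cfg : Config I J N) {t : ℕ} (m : Fin t → ℕ)
    (i : Fin t → ℕ → I) (j : Fin t → ℕ → J) : ℂ :=
  ∫ ω, cfg.traceP m i j ω ∂cfg.μ

/-- `Var(Tr P(X, D)) = E |Tr P - E Tr P|²`. -/
noncomputable def Config.varT (cfg : Config I J N) {t : ℕ} (m : Fin t → ℕ)
    (i : Fin t → ℕ → I) (j : Fin t → ℕ → J) : ℝ :=
  ∫ ω, ‖cfg.traceP m i j ω - cfg.meanT m i j‖ ^ 2 ∂cfg.μ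

/-- The normalized trace `𝐗 = (Tr P - E Tr P)/√Var(Tr P)`. -/
noncomputable def Config.normT (cfg : Config I J N) {t : ℕ} (m : Fin t → ℕ)
    (i : Fin t → ℕ → I) (j : Fin t → ℕ → J) (ω : cfg.Ω) : ℂ :=
  (cfg.traceP m i j ω - cfg.meanT m i j) / (Real.sqrt (cfg.varT m i j) : ℂ)

/-- The `r`-th cumulant `K_r(𝐗)` of the normalized trace. -/
noncomputable def Config.cum (cfg : Config I J N) (r : ℕ) {t : ℕ} (m : Fin t → ℕ)
    (i : Fin t → ℕ → I) (j : Fin t → ℕ → J) : ℂ :=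
  jointCumulant cfg.μ r (fun _ => cfg.normT m i j)

/-- The monomial `X_{i a} D_{j a} ⋯ X_{i (a+len-1)} D_{j (a+len-1)}`. -/
noncomputable def Config.Ymon (cfg : Config I J N) (iF : ℕ → I) (jF : ℕ → J)
    (a len : ℕ) (ω : cfg.Ω) : Matrix (Fin N) (Fin N) ℂ :=
  ((List.range' a len).map (fun l => cfg.X (iF l) ω * cfg.D (jF l))).prod

/-- The monomial with optional transposes:
`X_{i a}^{ε a} D_{j a} ⋯ X_{i (a+len-1)}^{ε (a+len-1)} D_{j (a+len-1)}`
(`ε l = true` means no transpose). -/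
noncomputable def Config.YmonE (cfg : Config I J N) (iF : ℕ → I) (jF : ℕ → J)
    (ε : ℕ → Bool) (a len : ℕ) (ω : cfg.Ω) : Matrix (Fin N) (Fin N) ℂ :=
  ((List.range' a len).map
    (fun l => (if ε l then cfg.X (iF l) ω else (cfg.X (iF l) ω)ᵀ) * cfg.D (jF l))).prod

/-- Which of the `r` consecutive intervals of lengths `m 0, …, m (r-1)` the index `x` lies in
(0-indexed). -/
def blockIdx (m : ℕ → ℕ) (r : ℕ) (x : ℕ) : ℕ :=
  ((Finset.range r).filter (fun k => ∑ j ∈ Finset.range (k + 1), m j ≤ x)).card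

/-- The interval partition `γ` of `{0, …, (∑_{k<r} m k) - 1}` into `r` consecutive intervals,
as a setoid. -/
def gammaSetoid (m : ℕ → ℕ) (r mt : ℕ) : Setoid (Fin mt) :=
  Setoid.ker (fun u : Fin mt => blockIdx m r u)

/-- The permutation with cycle decomposition
`(0,…,m₀-1)(m₀,…,m₀+m₁-1)⋯`, as a function on `ℕ`. -/
def gammaFun (m : ℕ → ℕ) (r : ℕ) (x : ℕ) : ℕ :=
  if x + 1 = ∑ j ∈ Finset.range (blockIdx m r x + 1), m j
  then ∑ j ∈ Finset.range (blockIdx m r x), m j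
  else x + 1

/-- The setoid (partition) on `Fin mt` generated by a pairing given as an involution `t`. -/
def pairingSetoid {mt : ℕ} (t : Fin mt → Fin mt) : Setoid (Fin mt) :=
  Relation.EqvGen.setoid (fun a b => t a = b)

/-- `|P₂^i(m)|`: the number of pairings `τ` of `{0,…,mt-1}` (encoded as fixed-point-free
involutions) with `τ ∨ γ = 1` and `τ ≤ ker i`. -/
noncomputable def pairingsCount (mt r : ℕ) (m : ℕ → ℕ) {I : Type*} (iF : ℕ → I) : ℕ :=
  Nat.card {t : Fin mt → Fin mt //
    Function.Involutive t ∧ (∀ u, t u ≠ u) ∧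
    (pairingSetoid t ⊔ gammaSetoid m r mt = ⊤) ∧
    (∀ u : Fin mt, iF (t u) = iF u)}

/-- The setoid on `Fin n` associated with a finpartition of `Finset.univ`. -/
def finpartitionSetoid {α : Type*} [DecidableEq α] [Fintype α]
    (τ : Finpartition (Finset.univ : Finset α)) : Setoid α where
  r x y := ∀ B ∈ τ.parts, (x ∈ B ↔ y ∈ B)
  iseqv := ⟨fun _ _ _ => Iff.rfl, fun h B hB => (h B hB).symm,
    fun h h' B hB => (h B hB).trans (h' B hB)⟩

section MatrixAux

variable {N : ℕ}

lemma opNorm_nonneg (A : Matrix (Fin N) (Fin N) ℂ) : 0 ≤ opNorm A := norm_nonneg _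

lemma coord_le_norm (y : EuclideanSpace ℂ (Fin N)) (a : Fin N) : ‖y a‖ ≤ ‖y‖ := by
  have h := EuclideanSpace.norm_eq y
  have h1 : ‖y a‖ ^ 2 ≤ ∑ i, ‖y i‖ ^ 2 :=
    Finset.single_le_sum (f := fun i => ‖y i‖ ^ 2) (fun i _ => sq_nonneg _) (Finset.mem_univ a)
  have h2 : ‖y a‖ = Real.sqrt (‖y a‖ ^ 2) := (Real.sqrt_sq (norm_nonneg _)).symm
  calc ‖y a‖ = ‖y a‖ := rfl
    _ = Real.sqrt (‖y a‖ ^ 2) := h2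
    _ ≤ Real.sqrt (∑ i, ‖y i‖ ^ 2) := Real.sqrt_le_sqrt h1
    _ = ‖y‖ := h.symm

set_option synthInstance.maxHeartbeats 1000000 in
lemma entry_le_opNorm (A : Matrix (Fin N) (Fin N) ℂ) (a b : Fin N) :
    ‖A a b‖ ≤ opNorm A := by
  set f := (Matrix.toEuclideanCLM (𝕜 := ℂ) (n := Fin N)) A with hf
  have h1 : f (EuclideanSpace.single b 1) =
      (WithLp.equiv 2 (Fin N → ℂ)).symm (A.mulVec (Pi.single b 1)) := by
    rw [hf]
    rfl
  have h2 : (f (EuclideanSpace.single b 1)) a = A a b := by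
    rw [h1]
    show (A.mulVec (Pi.single b 1)) a = A a b
    simp [Matrix.mulVec_single]
  calc ‖A a b‖ = ‖(f (EuclideanSpace.single b 1)) a‖ := by rw [h2]
    _ ≤ ‖f (EuclideanSpace.single b 1)‖ := coord_le_norm _ _
    _ ≤ ‖f‖ * ‖EuclideanSpace.single b (1:ℂ)‖ := ContinuousLinearMap.le_opNorm f (EuclideanSpace.single b 1)
    _ = opNorm A := by simp [opNorm, hf]

lemma opNorm_mul_le (A B : Matrix (Fin N) (Fin N) ℂ) :
    opNorm (A * B) ≤ opNorm A * opNorm B := by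
  unfold opNorm
  rw [map_mul]
  exact norm_mul_le _ _

lemma abs_trace_le (A : Matrix (Fin N) (Fin N) ℂ) :
    ‖Matrix.trace A‖ ≤ (N : ℝ) * opNorm A := by
  have : ‖Matrix.trace A‖ ≤ ∑ i : Fin N, ‖A i i‖ := by
    simpa [Matrix.trace, Matrix.diag] using
      norm_sum_le (Finset.univ : Finset (Fin N)) (fun i => A i i)
  refine this.trans ?_
  calc ∑ i : Fin N, ‖A i i‖ ≤ ∑ _i : Fin N, opNorm A :=
        Finset.sum_le_sum fun i _ => entry_le_opNorm A i i
    _ = (N : ℝ) * opNorm A := by simp [mul_comm]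

end MatrixAux

end RMT

namespace RMT
open Equiv Equiv.Perm

section Orbits

variable {α : Type*}

def scSetoid (σ : Equiv.Perm α) : Setoid α :=
  ⟨σ.SameCycle, ⟨fun _ => Equiv.Perm.SameCycle.refl σ _, fun h => h.symm, fun h h' => h.trans h'⟩⟩

noncomputable def nOrbits (σ : Equiv.Perm α) : ℕ := Nat.card (Quotient (scSetoid σ))

/-- The relation `SameCycle σ` joined with the pair `(a, b)`. -/
def Rrel (σ : Equiv.Perm α) (a b : α) (x y : α) : Prop :=
  σ.SameCycle x y ∨ (σ.SameCycle x a ∧ σ.SameCycle b y) ∨ (σ.SameCycle x b ∧ σ.SameCycle a y)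

lemma Rrel_refl (σ : Equiv.Perm α) (a b : α) (x : α) : Rrel σ a b x x :=
  Or.inl (Equiv.Perm.SameCycle.refl σ x)

lemma Rrel_symm {σ : Equiv.Perm α} {a b x y : α} (h : Rrel σ a b x y) : Rrel σ a b y x := by
  rcases h with h | ⟨h1, h2⟩ | ⟨h1, h2⟩
  · exact Or.inl h.symm
  · exact Or.inr (Or.inr ⟨h2.symm, h1.symm⟩)
  · exact Or.inr (Or.inl ⟨h2.symm, h1.symm⟩)

lemma Rrel_trans {σ : Equiv.Perm α} {a b x y z : α}
    (h : Rrel σ a b x y) (h' : Rrel σ a b y z) : Rrel σ a b x z := by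
  rcases h with h | ⟨h1, h2⟩ | ⟨h1, h2⟩ <;> rcases h' with g | ⟨g1, g2⟩ | ⟨g1, g2⟩
  · exact Or.inl (h.trans g)
  · exact Or.inr (Or.inl ⟨h.trans g1, g2⟩)
  · exact Or.inr (Or.inr ⟨h.trans g1, g2⟩)
  · exact Or.inr (Or.inl ⟨h1, h2.trans g⟩)
  · exact Or.inr (Or.inl ⟨h1, g2⟩)
  · exact Or.inl (h1.trans g2)
  · exact Or.inr (Or.inr ⟨h1, h2.trans g⟩)
  · exact Or.inl (h1.trans g2)
  · exact Or.inr (Or.inr ⟨h1, g2⟩)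

def Rsetoid (σ : Equiv.Perm α) (a b : α) : Setoid α :=
  ⟨Rrel σ a b, ⟨Rrel_refl σ a b, Rrel_symm, Rrel_trans⟩⟩

variable [Fintype α] [DecidableEq α]

/-- One step of the walk: `x` is `Rrel σ a b`-related to `(swap a b * σ) x`. -/
lemma Rrel_step (σ : Equiv.Perm α) (a b : α) (x : α) :
    Rrel σ a b x ((Equiv.swap a b * σ) x) := by
  have hx : σ.SameCycle x (σ x) := ⟨1, by simp⟩
  rcases eq_or_ne (σ x) a with h | h
  · have : (Equiv.swap a b * σ) x = b := by
      simp [Equiv.Perm.mul_apply, h]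
    rw [this]
    exact Or.inr (Or.inl ⟨h ▸ hx, Equiv.Perm.SameCycle.refl σ b⟩)
  · rcases eq_or_ne (σ x) b with h2 | h2
    · have : (Equiv.swap a b * σ) x = a := by
        simp [Equiv.Perm.mul_apply, h2]
      rw [this]
      exact Or.inr (Or.inr ⟨h2 ▸ hx, Equiv.Perm.SameCycle.refl σ a⟩)
    · have : (Equiv.swap a b * σ) x = σ x := by
        simp [Equiv.Perm.mul_apply, Equiv.swap_apply_of_ne_of_ne h h2]
      rw [this]
      exact Or.inl hx

lemma Rrel_of_sameCycle_mul_swap (σ : Equiv.Perm α) (a b : α) {x y : α}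
    (h : (Equiv.swap a b * σ).SameCycle x y) : Rrel σ a b x y := by
  obtain ⟨k, -, hk⟩ := h.exists_pow_eq'
  subst hk
  clear h
  induction k generalizing x with
  | zero => simpa using Rrel_refl σ a b x
  | succ n ih =>
    have h1 : Rrel σ a b x ((Equiv.swap a b * σ) x) := Rrel_step σ a b x
    have h2 : Rrel σ a b ((Equiv.swap a b * σ) x)
        (((Equiv.swap a b * σ) ^ n) ((Equiv.swap a b * σ) x)) := ih
    have h3 : (((Equiv.swap a b * σ) ^ (n + 1)) x) =
        ((Equiv.swap a b * σ) ^ n) ((Equiv.swap a b * σ) x) := by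
      rw [pow_succ]
      simp
    rw [h3]
    exact Rrel_trans h1 h2

lemma nOrbits_Rsetoid_le (σ : Equiv.Perm α) (a b : α) :
    Nat.card (Quotient (Rsetoid σ a b)) ≤ nOrbits (Equiv.swap a b * σ) := by
  classical
  set ρ := Equiv.swap a b * σ
  have key : ∀ x y : α, ρ.SameCycle x y → Rrel σ a b x y :=
    fun x y h => Rrel_of_sameCycle_mul_swap σ a b h
  let G : Quotient (scSetoid ρ) → Quotient (Rsetoid σ a b) :=
    Quotient.lift (fun x => Quotient.mk (Rsetoid σ a b) x)
      (fun x y h => Quotient.sound (key x y h))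
  have hG : Function.Surjective G := by
    intro q
    obtain ⟨x, rfl⟩ := Quotient.exists_rep q
    exact ⟨Quotient.mk (scSetoid ρ) x, rfl⟩
  exact Nat.card_le_card_of_surjective G hG

lemma nOrbits_le_Rsetoid_add_one (σ : Equiv.Perm α) (a b : α) :
    nOrbits σ ≤ Nat.card (Quotient (Rsetoid σ a b)) + 1 := by
  classical
  let F : Quotient (scSetoid σ) → Quotient (Rsetoid σ a b) :=
    Quotient.lift (fun x => Quotient.mk (Rsetoid σ a b) x)
      (fun x y h => Quotient.sound (Or.inl h))
  let j : Quotient (scSetoid σ) → Quotient (Rsetoid σ a b) ⊕ Unit :=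
    fun c => if c = Quotient.mk (scSetoid σ) b then Sum.inr () else Sum.inl (F c)
  have hj : Function.Injective j := by
    intro c d h
    obtain ⟨x, rfl⟩ := Quotient.exists_rep c
    obtain ⟨y, rfl⟩ := Quotient.exists_rep d
    by_cases hc : Quotient.mk (scSetoid σ) x = Quotient.mk (scSetoid σ) b <;>
      by_cases hd : Quotient.mk (scSetoid σ) y = Quotient.mk (scSetoid σ) b
    · rw [hc, hd]
    · simp only [j, if_pos hc, if_neg hd] at h
      exact absurd h (by simp)
    · simp only [j, if_neg hc, if_pos hd] at h
      exact absurd h (by simp)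
    · simp only [j, if_neg hc, if_neg hd] at h
      have hFxy : F (Quotient.mk (scSetoid σ) x) = F (Quotient.mk (scSetoid σ) y) := by
        exact Sum.inl.inj h
      have hR : Rrel σ a b x y := Quotient.exact hFxy
      rcases hR with h' | ⟨h1, h2⟩ | ⟨h1, h2⟩
      · exact Quotient.sound h'
      · exact absurd (Quotient.sound h2.symm : Quotient.mk (scSetoid σ) y
          = Quotient.mk (scSetoid σ) b) hd
      · exact absurd (Quotient.sound h1 : Quotient.mk (scSetoid σ) x
          = Quotient.mk (scSetoid σ) b) hc
  calc nOrbits σ ≤ Nat.card (Quotient (Rsetoid σ a b) ⊕ Unit) :=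
        Nat.card_le_card_of_injective j hj
    _ = Nat.card (Quotient (Rsetoid σ a b)) + 1 := by
        rw [Nat.card_sum]; simp

/-- Multiplying by a transposition decreases the number of orbits by at most one. -/
lemma nOrbits_le_mul_swap_add_one (σ : Equiv.Perm α) (a b : α) :
    nOrbits σ ≤ nOrbits (Equiv.swap a b * σ) + 1 :=
  (nOrbits_le_Rsetoid_add_one σ a b).trans
    (Nat.add_le_add_right (nOrbits_Rsetoid_le σ a b) 1)

lemma nOrbits_le_list_swap (L : List (Equiv.Perm α)) (hL : ∀ g ∈ L, g.IsSwap) :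
    ∀ σ : Equiv.Perm α, nOrbits σ ≤ nOrbits (L.prod * σ) + L.length := by
  induction L with
  | nil => intro σ; simp
  | cons τ L ih =>
    intro σ
    obtain ⟨a, b, -, rfl⟩ := hL τ List.mem_cons_self
    have h1 := ih (fun g hg => hL g (List.mem_cons_of_mem _ hg)) σ
    have h2 := nOrbits_le_mul_swap_add_one (L.prod * σ) a b
    have h3 : Equiv.swap a b * (L.prod * σ) = (Equiv.swap a b :: L).prod * σ := by
      rw [List.prod_cons, mul_assoc]
    rw [h3] at h2
    calc nOrbits σ ≤ nOrbits (L.prod * σ) + L.length := h1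
      _ ≤ (nOrbits ((Equiv.swap a b :: L).prod * σ) + 1) + L.length :=
          Nat.add_le_add_right h2 _
      _ = nOrbits ((Equiv.swap a b :: L).prod * σ) + (Equiv.swap a b :: L).length := by
          simp [List.length_cons]; ring

end Orbits
end RMT

namespace RMT
open Equiv Equiv.Perm


section Transfer

variable {α : Type} [Fintype α] [DecidableEq α] (σ : Equiv.Perm α) (l₀ : α)

/-- Forward orbit transfer for a restriction of `σ` skipping `l₀`. -/
lemma sameCycle_of_subtype (σ' : Equiv.Perm {x : α // x ≠ l₀})
    (hcoe : ∀ x, ((σ' x : α)) = if σ (↑x) = l₀ then σ l₀ else σ ↑x)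
    {x y : {x : α // x ≠ l₀}} (h : σ'.SameCycle x y) : σ.SameCycle ↑x ↑y := by
  have step : ∀ z : {x : α // x ≠ l₀}, σ.SameCycle ↑z ↑(σ' z) := by
    intro z
    rw [hcoe z]
    by_cases hz : σ (↑z) = l₀
    · rw [if_pos hz]
      have s1 : σ.SameCycle (↑z) (σ ↑z) := ⟨1, by simp⟩
      have s2 : σ.SameCycle (σ ↑z) (σ l₀) := by rw [hz]; exact ⟨1, by simp⟩
      exact Equiv.Perm.SameCycle.trans s1 s2
    · rw [if_neg hz]
      exact ⟨1, by simp⟩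
  obtain ⟨k, -, hk⟩ := h.exists_pow_eq'
  subst hk
  clear h
  induction k generalizing x with
  | zero => simpa using Equiv.Perm.SameCycle.refl σ (↑x : α)
  | succ n ih =>
    have h3 : ((σ' ^ (n + 1)) x) = (σ' ^ n) (σ' x) := by
      rw [pow_succ]; simp
    rw [h3]
    exact Equiv.Perm.SameCycle.trans (step x) (ih (x := σ' x))

/-- Backward orbit transfer. -/
lemma sameCycle_to_subtype (σ' : Equiv.Perm {x : α // x ≠ l₀})
    (hcoe : ∀ x, ((σ' x : α)) = if σ (↑x) = l₀ then σ l₀ else σ ↑x)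
    {x y : {x : α // x ≠ l₀}} (h : σ.SameCycle ↑x ↑y) : σ'.SameCycle x y := by
  obtain ⟨k, -, hk⟩ := h.exists_pow_eq'
  clear h
  induction k using Nat.strong_induction_on generalizing x with
  | _ k ihk =>
    match k, hk with
    | 0, hk =>
      have : x = y := Subtype.ext (by simpa using hk)
      rw [this]
    | (n+1), hk =>
      have hpow : ((σ ^ (n + 1)) (↑x : α)) = (σ ^ n) (σ ↑x) := by
        rw [pow_succ]; simp
      by_cases hz : σ (↑x : α) = l₀
      · have hn : (σ ^ n) l₀ = (↑y : α) := by rw [← hk, hpow, hz]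
        have hnne : n ≠ 0 := by
          intro h0
          rw [h0] at hn
          exact y.2 (by simpa using hn.symm)
        obtain ⟨n', rfl⟩ := Nat.exists_eq_succ_of_ne_zero hnne
        have hcoe1 : ((σ' x : α)) = σ l₀ := by rw [hcoe x, if_pos hz]
        have hk' : (σ ^ n') (↑(σ' x) : α) = ↑y := by
          rw [hcoe1]
          have : (σ ^ (n' + 1)) l₀ = (σ ^ n') (σ l₀) := by rw [pow_succ]; simp
          rw [← this, hn]
        have := ihk n' (by omega) (x := σ' x) hk'
        exact Equiv.Perm.SameCycle.trans (⟨1, by simp⟩ : σ'.SameCycle x (σ' x)) this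
      · have hcoe1 : ((σ' x : α)) = σ ↑x := by rw [hcoe x, if_neg hz]
        have hk' : (σ ^ n) (↑(σ' x) : α) = ↑y := by rw [hcoe1, ← hpow, hk]
        have := ihk n (by omega) (x := σ' x) hk'
        exact Equiv.Perm.SameCycle.trans (⟨1, by simp⟩ : σ'.SameCycle x (σ' x)) this

lemma nOrbits_subtype_le (σ' : Equiv.Perm {x : α // x ≠ l₀})
    (hcoe : ∀ x, ((σ' x : α)) = if σ (↑x) = l₀ then σ l₀ else σ ↑x) :
    nOrbits σ' ≤ nOrbits σ := by
  classical
  let F : Quotient (scSetoid σ') → Quotient (scSetoid σ) :=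
    Quotient.lift (fun x : {x : α // x ≠ l₀} => Quotient.mk (scSetoid σ) ↑x)
      (fun x y h => Quotient.sound (sameCycle_of_subtype σ l₀ σ' hcoe h))
  have hF : Function.Injective F := by
    intro c d h
    obtain ⟨x, rfl⟩ := Quotient.exists_rep c
    obtain ⟨y, rfl⟩ := Quotient.exists_rep d
    exact Quotient.sound (sameCycle_to_subtype σ l₀ σ' hcoe (Quotient.exact h))
  exact Nat.card_le_card_of_injective F hF

lemma nOrbits_subtype_add_one_le (σ' : Equiv.Perm {x : α // x ≠ l₀})
    (hfix : σ l₀ = l₀)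
    (hcoe : ∀ x, ((σ' x : α)) = if σ (↑x) = l₀ then σ l₀ else σ ↑x) :
    nOrbits σ' + 1 ≤ nOrbits σ := by
  classical
  have hfixpow : ∀ k : ℕ, (σ ^ k) l₀ = l₀ := by
    intro k
    induction k with
    | zero => simp
    | succ n ih => rw [pow_succ]; simp [ih, hfix]
  let j : Quotient (scSetoid σ') ⊕ Unit → Quotient (scSetoid σ) :=
    fun c => match c with
    | Sum.inl c => Quotient.lift
        (fun x : {x : α // x ≠ l₀} => Quotient.mk (scSetoid σ) ↑x)
        (fun x y h => Quotient.sound (sameCycle_of_subtype σ l₀ σ' hcoe h)) c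
    | Sum.inr _ => Quotient.mk (scSetoid σ) l₀
  have hnot : ∀ x : {x : α // x ≠ l₀},
      ¬ (Quotient.mk (scSetoid σ) (↑x : α) = Quotient.mk (scSetoid σ) l₀) := by
    intro x hx
    have hsc : σ.SameCycle ↑x l₀ := Quotient.exact hx
    obtain ⟨k, -, hk⟩ := hsc.symm.exists_pow_eq'
    rw [hfixpow k] at hk
    exact x.2 hk.symm
  have hj : Function.Injective j := by
    rintro (c | u) (d | v) h
    · obtain ⟨x, rfl⟩ := Quotient.exists_rep c
      obtain ⟨y, rfl⟩ := Quotient.exists_rep d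
      have : σ.SameCycle (↑x : α) ↑y := Quotient.exact h
      exact congrArg Sum.inl
        (Quotient.sound (sameCycle_to_subtype σ l₀ σ' hcoe this))
    · obtain ⟨x, rfl⟩ := Quotient.exists_rep c
      exact absurd h (hnot x)
    · obtain ⟨y, rfl⟩ := Quotient.exists_rep d
      exact absurd h.symm (hnot y)
    · simp
  have := Nat.card_le_card_of_injective j hj
  calc nOrbits σ' + 1 = Nat.card (Quotient (scSetoid σ') ⊕ Unit) := by
        rw [Nat.card_sum]; simp [nOrbits]
    _ ≤ nOrbits σ := this

end Transfer
end RMT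

namespace RMT
open Equiv Equiv.Perm

section Contract

variable {α : Type} [Fintype α] [DecidableEq α]

/-- The permutation of `{x // x ≠ l₀}` obtained from `σ` by skipping over `l₀`. -/
def restrictPerm (σ : Equiv.Perm α) (l₀ : α) : Equiv.Perm {x : α // x ≠ l₀} :=
  (Equiv.swap l₀ (σ l₀) * σ).subtypePerm (fun x => by
    have h0 : (Equiv.swap l₀ (σ l₀) * σ) l₀ = l₀ := by
      simp [Equiv.Perm.mul_apply]
    constructor
    · intro hx h1
      exact hx (h1 ▸ h0)
    · intro hx h1
      exact hx ((Equiv.swap l₀ (σ l₀) * σ).injective (h1.trans h0.symm) : x = l₀))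

lemma restrictPerm_coe (σ : Equiv.Perm α) (l₀ : α) (x : {x : α // x ≠ l₀}) :
    ((restrictPerm σ l₀ x : α)) = if σ (↑x) = l₀ then σ l₀ else σ ↑x := by
  show (Equiv.swap l₀ (σ l₀) * σ) ↑x = _
  rw [Equiv.Perm.mul_apply]
  by_cases hz : σ (↑x : α) = l₀
  · rw [if_pos hz, hz, Equiv.swap_apply_left]
  · rw [if_neg hz]
    have hz2 : σ (↑x : α) ≠ σ l₀ := fun hc => x.2 (σ.injective hc)
    exact Equiv.swap_apply_of_ne_of_ne hz hz2

variable {N : ℕ}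

lemma contract_sum_fix (σ : Equiv.Perm α) (l₀ : α) (hfix : σ l₀ = l₀)
    (D : α → Matrix (Fin N) (Fin N) ℂ) :
    ∑ φ : α → Fin N, ∏ l, D l (φ l) (φ (σ l)) =
      (Matrix.trace (D l₀)) *
      ∑ φ' : {x : α // x ≠ l₀} → Fin N, ∏ l : {x : α // x ≠ l₀},
        D ↑l (φ' l) (φ' (restrictPerm σ l₀ l)) := by
  classical
  set e := (Equiv.funSplitAt l₀ (Fin N)).symm with he
  have hval : ∀ (v : Fin N) (φ' : {x : α // x ≠ l₀} → Fin N) (z : α) (hz : z ≠ l₀),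
      e (v, φ') z = φ' ⟨z, hz⟩ := by
    intro v φ' z hz
    simp [he, Equiv.funSplitAt, Equiv.piSplitAt, hz]
  have hval0 : ∀ (v : Fin N) (φ' : {x : α // x ≠ l₀} → Fin N), e (v, φ') l₀ = v := by
    intro v φ'
    simp [he, Equiv.funSplitAt, Equiv.piSplitAt]
  rw [← Equiv.sum_comp e (fun φ : α → Fin N => ∏ l, D l (φ l) (φ (σ l))),
    Fintype.sum_prod_type, Finset.sum_comm]
  rw [Finset.mul_sum]
  refine Finset.sum_congr rfl (fun φ' _ => ?_)
  have key : ∀ v : Fin N,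
      ∏ l, D l (e (v, φ') l) (e (v, φ') (σ l)) =
      D l₀ v v * ∏ l : {x : α // x ≠ l₀}, D ↑l (φ' l) (φ' (restrictPerm σ l₀ l)) := by
    intro v
    rw [← Finset.prod_erase_mul Finset.univ _ (Finset.mem_univ l₀)]
    rw [Finset.prod_subtype (p := fun x : α => x ≠ l₀) (Finset.univ.erase l₀)
      (fun x => by simp) (fun l => D l (e (v, φ') l) (e (v, φ') (σ l)))]
    rw [mul_comm]
    congr 1
    · rw [hfix, hval0]
    · refine Finset.prod_congr rfl (fun l _ => ?_)
      have h1 : e (v, φ') ↑l = φ' l := by rw [hval v φ' ↑l l.2]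
      have h2 : σ (↑l : α) ≠ l₀ := by
        intro hc
        exact l.2 (σ.injective (hc.trans hfix.symm))
      have h3 : e (v, φ') (σ ↑l) = φ' ⟨σ ↑l, h2⟩ := hval v φ' _ h2
      have h4 : (⟨σ ↑l, h2⟩ : {x : α // x ≠ l₀}) = restrictPerm σ l₀ l := by
        refine Subtype.ext ?_
        rw [restrictPerm_coe, if_neg h2]
      rw [h1, h3, h4]
  calc ∑ v, ∏ l, D l (e (v, φ') l) (e (v, φ') (σ l))
      = ∑ v, D l₀ v v * ∏ l : {x : α // x ≠ l₀}, D ↑l (φ' l) (φ' (restrictPerm σ l₀ l)) :=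
        Finset.sum_congr rfl (fun v _ => key v)
    _ = (∑ v, D l₀ v v) * ∏ l : {x : α // x ≠ l₀}, D ↑l (φ' l) (φ' (restrictPerm σ l₀ l)) := by
        rw [Finset.sum_mul]
    _ = Matrix.trace (D l₀) * ∏ l : {x : α // x ≠ l₀}, D ↑l (φ' l) (φ' (restrictPerm σ l₀ l)) := by
        rfl

lemma contract_sum_move (σ : Equiv.Perm α) (l₀ : α) (h : σ l₀ ≠ l₀)
    (D : α → Matrix (Fin N) (Fin N) ℂ) :
    ∑ φ : α → Fin N, ∏ l, D l (φ l) (φ (σ l)) =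
      ∑ φ' : {x : α // x ≠ l₀} → Fin N, ∏ l : {x : α // x ≠ l₀},
        (if (l : α) = σ⁻¹ l₀ then D (σ⁻¹ l₀) * D l₀ else D ↑l) (φ' l)
          (φ' (restrictPerm σ l₀ l)) := by
  classical
  have hσp : σ (σ⁻¹ l₀) = l₀ := σ.apply_symm_apply l₀
  have hp : σ⁻¹ l₀ ≠ l₀ := by
    intro hc
    rw [hc] at hσp
    exact h hσp
  set p : α := σ⁻¹ l₀ with hpdef
  set p' : {x : α // x ≠ l₀} := ⟨p, hp⟩ with hp'def
  have hσ'p : ((restrictPerm σ l₀ p' : α)) = σ l₀ := by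
    rw [restrictPerm_coe]
    have hσp' : σ (↑p' : α) = l₀ := hσp
    simp [hσp']
  set e := (Equiv.funSplitAt l₀ (Fin N)).symm with he
  have hval : ∀ (v : Fin N) (φ' : {x : α // x ≠ l₀} → Fin N) (z : α) (hz : z ≠ l₀),
      e (v, φ') z = φ' ⟨z, hz⟩ := by
    intro v φ' z hz
    simp [he, Equiv.funSplitAt, Equiv.piSplitAt, hz]
  have hval0 : ∀ (v : Fin N) (φ' : {x : α // x ≠ l₀} → Fin N), e (v, φ') l₀ = v := by
    intro v φ'
    simp [he, Equiv.funSplitAt, Equiv.piSplitAt]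
  rw [← Equiv.sum_comp e (fun φ : α → Fin N => ∏ l, D l (φ l) (φ (σ l))),
    Fintype.sum_prod_type, Finset.sum_comm]
  refine Finset.sum_congr rfl (fun φ' _ => ?_)
  set G : {x : α // x ≠ l₀} → ℂ := fun l =>
    (if (l : α) = p then D p * D l₀ else D ↑l) (φ' l)
      (φ' (restrictPerm σ l₀ l)) with hG
  have key : ∀ v : Fin N,
      ∏ l, D l (e (v, φ') l) (e (v, φ') (σ l)) =
      (D p (φ' p') v * D l₀ v (φ' (restrictPerm σ l₀ p'))) *
        ∏ l ∈ Finset.univ.erase p', G l := by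
    intro v
    rw [← Finset.prod_erase_mul Finset.univ _ (Finset.mem_univ l₀)]
    rw [Finset.prod_subtype (p := fun x : α => x ≠ l₀) (Finset.univ.erase l₀)
      (fun x => by simp) (fun l => D l (e (v, φ') l) (e (v, φ') (σ l)))]
    rw [← Finset.mul_prod_erase Finset.univ _ (Finset.mem_univ p')]
    have hf_p : D (↑p' : α) (e (v, φ') ↑p') (e (v, φ') (σ ↑p')) = D p (φ' p') v := by
      have h1 : e (v, φ') ↑p' = φ' p' := by
        rw [hval v φ' ↑p' p'.2]
      have h2 : σ (↑p' : α) = l₀ := hσp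
      rw [h1, h2, hval0]
    have hf_l₀ : D l₀ (e (v, φ') l₀) (e (v, φ') (σ l₀)) =
        D l₀ v (φ' (restrictPerm σ l₀ p')) := by
      have h1 : e (v, φ') (σ l₀) = φ' ⟨σ l₀, h⟩ := hval v φ' _ h
      have h2 : (⟨σ l₀, h⟩ : {x : α // x ≠ l₀}) = restrictPerm σ l₀ p' :=
        Subtype.ext hσ'p.symm
      rw [hval0, h1, h2]
    have hrest : ∀ l ∈ Finset.univ.erase p',
        D (↑l : α) (e (v, φ') ↑l) (e (v, φ') (σ ↑l)) = G l := by
      intro l hl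
      have hlp : l ≠ p' := (Finset.mem_erase.mp hl).1
      have hlp2 : (↑l : α) ≠ p := fun hc => hlp (Subtype.ext hc)
      have h2 : σ (↑l : α) ≠ l₀ := by
        intro hc
        exact hlp2 (σ.injective (by rw [hc, hσp]))
      have h1 : e (v, φ') ↑l = φ' l := hval v φ' ↑l l.2
      have h3 : e (v, φ') (σ ↑l) = φ' ⟨σ ↑l, h2⟩ := hval v φ' _ h2
      have h4 : (⟨σ ↑l, h2⟩ : {x : α // x ≠ l₀}) = restrictPerm σ l₀ l := by
        refine Subtype.ext ?_
        rw [restrictPerm_coe, if_neg h2]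
      rw [h1, h3, h4, hG]
      simp only [if_neg hlp2]
    rw [Finset.prod_congr rfl hrest, hf_p, hf_l₀]
    ring
  calc ∑ v, ∏ l, D l (e (v, φ') l) (e (v, φ') (σ l))
      = ∑ v, (D p (φ' p') v * D l₀ v (φ' (restrictPerm σ l₀ p'))) *
          ∏ l ∈ Finset.univ.erase p', G l := Finset.sum_congr rfl (fun v _ => key v)
    _ = (∑ v, D p (φ' p') v * D l₀ v (φ' (restrictPerm σ l₀ p'))) *
          ∏ l ∈ Finset.univ.erase p', G l := by rw [Finset.sum_mul]
    _ = ((D p * D l₀) (φ' p') (φ' (restrictPerm σ l₀ p'))) *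
          ∏ l ∈ Finset.univ.erase p', G l := by rw [Matrix.mul_apply]
    _ = G p' * ∏ l ∈ Finset.univ.erase p', G l := by
          have hGp : G p' = (D p * D l₀) (φ' p') (φ' (restrictPerm σ l₀ p')) := by
            have hpp : (↑p' : α) = p := rfl
            simp [hG, hpp]
          rw [hGp]
    _ = ∏ l, G l := Finset.mul_prod_erase Finset.univ G (Finset.mem_univ p')

end Contract
end RMT
section Main
namespace RMT
open Equiv Equiv.Perm

lemma abstract_bound {N : ℕ} (hN : 1 ≤ N) :
    ∀ (n : ℕ) (α : Type) [Fintype α] [DecidableEq α], Fintype.card α = n →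
    ∀ (σ : Equiv.Perm α) (D : α → Matrix (Fin N) (Fin N) ℂ),
    ‖∑ φ : α → Fin N, ∏ l, D l (φ l) (φ (σ l))‖ ≤
      (N : ℝ) ^ nOrbits σ * ∏ l, opNorm (D l) := by
  intro n
  induction n using Nat.strong_induction_on with
  | _ n ih =>
    intro α _ _ hcard σ D
    have hN1 : (1 : ℝ) ≤ (N : ℝ) := by exact_mod_cast hN
    rcases isEmpty_or_nonempty α with hα | hα
    · have h1 : (∑ φ : α → Fin N, ∏ l, D l (φ l) (φ (σ l))) = 1 := by
        have h2 : ∀ φ : α → Fin N, (∏ l, D l (φ l) (φ (σ l))) = 1 := by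
          intro φ; rw [Finset.univ_eq_empty, Finset.prod_empty]
        rw [Finset.sum_congr rfl (fun φ _ => h2 φ), Finset.sum_const, Finset.card_univ]
        have : Fintype.card (α → Fin N) = 1 := by
          rw [Fintype.card_fun]
          simp
        rw [this]; simp
      rw [h1]
      have h3 : (∏ l, opNorm (D l)) = 1 := by
        rw [Finset.univ_eq_empty, Finset.prod_empty]
      rw [h3, mul_one]
      simpa using one_le_pow₀ (a := (N:ℝ)) hN1 (n := nOrbits σ)
    · have hn : 0 < n := hcard ▸ (Fintype.card_pos_iff.mpr hα)
      obtain ⟨l₀⟩ := hα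
      have hcard' : Fintype.card {x : α // x ≠ l₀} = n - 1 := by
        have := Fintype.card_subtype_compl (p := fun x : α => x = l₀)
        rw [Fintype.card_subtype_eq l₀, hcard] at this
        exact this
      have hlt : n - 1 < n := by omega
      have hcoe := restrictPerm_coe σ l₀
      have hsplitProd : (∏ l, opNorm (D l)) =
          (∏ l : {x : α // x ≠ l₀}, opNorm (D ↑l)) * opNorm (D l₀) := by
        rw [← Finset.prod_erase_mul Finset.univ _ (Finset.mem_univ l₀)]
        congr 1
        exact Finset.prod_subtype (p := fun x : α => x ≠ l₀) _ (fun x => by simp) _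
      have hprodnn : (0:ℝ) ≤ ∏ l, opNorm (D l) :=
        Finset.prod_nonneg (fun l _ => opNorm_nonneg _)
      by_cases hfix : σ l₀ = l₀
      · rw [contract_sum_fix σ l₀ hfix D, norm_mul]
        have hIH := ih (n-1) hlt {x : α // x ≠ l₀} hcard' (restrictPerm σ l₀)
          (fun l => D ↑l)
        have horb := nOrbits_subtype_add_one_le σ l₀ (restrictPerm σ l₀) hfix hcoe
        calc ‖Matrix.trace (D l₀)‖ *
              ‖∑ φ' : {x : α // x ≠ l₀} → Fin N,
                ∏ l : {x : α // x ≠ l₀}, D ↑l (φ' l) (φ' (restrictPerm σ l₀ l))‖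
            ≤ ((N:ℝ) * opNorm (D l₀)) *
              ((N : ℝ) ^ nOrbits (restrictPerm σ l₀) *
                ∏ l : {x : α // x ≠ l₀}, opNorm (D ↑l)) := by
              refine mul_le_mul (abs_trace_le _) hIH (norm_nonneg _) ?_
              exact mul_nonneg (by positivity) (opNorm_nonneg _)
          _ = (N : ℝ) ^ (nOrbits (restrictPerm σ l₀) + 1) * ∏ l, opNorm (D l) := by
              rw [hsplitProd, pow_succ]; ring
          _ ≤ (N : ℝ) ^ nOrbits σ * ∏ l, opNorm (D l) :=
              mul_le_mul_of_nonneg_right (pow_le_pow_right₀ hN1 horb) hprodnn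
      · rw [contract_sum_move σ l₀ hfix D]
        set D' : {x : α // x ≠ l₀} → Matrix (Fin N) (Fin N) ℂ := fun l =>
          if (l : α) = σ⁻¹ l₀ then D (σ⁻¹ l₀) * D l₀ else D ↑l with hD'
        have hIH := ih (n-1) hlt {x : α // x ≠ l₀} hcard' (restrictPerm σ l₀) D'
        have horb := nOrbits_subtype_le σ l₀ (restrictPerm σ l₀) hcoe
        have hσp : σ (σ⁻¹ l₀) = l₀ := σ.apply_symm_apply l₀
        have hq : σ⁻¹ l₀ ≠ l₀ := by
          intro hc; rw [hc] at hσp; exact hfix hσp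
        set q' : {x : α // x ≠ l₀} := ⟨σ⁻¹ l₀, hq⟩ with hq'
        have hDprod : (∏ l : {x : α // x ≠ l₀}, opNorm (D' l)) ≤ ∏ l, opNorm (D l) := by
          rw [← Finset.mul_prod_erase Finset.univ _ (Finset.mem_univ q')]
          have h1 : opNorm (D' q') ≤ opNorm (D (σ⁻¹ l₀)) * opNorm (D l₀) := by
            have : D' q' = D (σ⁻¹ l₀) * D l₀ := if_pos rfl
            rw [this]; exact opNorm_mul_le _ _
          have h2 : ∀ l ∈ Finset.univ.erase q', opNorm (D' l) = opNorm (D ↑l) := by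
            intro l hl
            have hlq : l ≠ q' := (Finset.mem_erase.mp hl).1
            have : D' l = D ↑l := by
              rw [hD']
              simp only []
              rw [if_neg (fun hc => hlq (Subtype.ext hc))]
            rw [this]
          rw [Finset.prod_congr rfl h2]
          have h3 : (∏ l, opNorm (D l)) =
              (opNorm (D ↑q') * ∏ l ∈ Finset.univ.erase q', opNorm (D ↑l)) * opNorm (D l₀) := by
            rw [hsplitProd, ← Finset.mul_prod_erase Finset.univ
              (fun l : {x : α // x ≠ l₀} => opNorm (D ↑l)) (Finset.mem_univ q')]
          rw [h3]
          have h4 : (0:ℝ) ≤ ∏ l ∈ Finset.univ.erase q', opNorm (D ↑l) :=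
            Finset.prod_nonneg (fun l _ => opNorm_nonneg _)
          calc opNorm (D' q') * ∏ l ∈ Finset.univ.erase q', opNorm (D ↑l)
              ≤ (opNorm (D (σ⁻¹ l₀)) * opNorm (D l₀)) *
                ∏ l ∈ Finset.univ.erase q', opNorm (D ↑l) :=
                mul_le_mul_of_nonneg_right h1 h4
            _ = (opNorm (D ↑q') * ∏ l ∈ Finset.univ.erase q', opNorm (D ↑l)) * opNorm (D l₀) := by
                rw [hq']; ring
        refine hIH.trans ?_
        have h5 : (0:ℝ) ≤ (N : ℝ) ^ nOrbits (restrictPerm σ l₀) := by positivity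
        calc (N : ℝ) ^ nOrbits (restrictPerm σ l₀) * ∏ l : {x : α // x ≠ l₀}, opNorm (D' l)
            ≤ (N : ℝ) ^ nOrbits (restrictPerm σ l₀) * ∏ l, opNorm (D l) :=
              mul_le_mul_of_nonneg_left hDprod h5
          _ ≤ (N : ℝ) ^ nOrbits σ * ∏ l, opNorm (D l) :=
              mul_le_mul_of_nonneg_right (pow_le_pow_right₀ hN1 horb) hprodnn

end RMT
end Main
namespace RMT
open Equiv Equiv.Perm

lemma nOrbits_finRotate_le (m : ℕ) (hm : 2 ≤ m) : nOrbits (finRotate m) ≤ 1 := by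
  obtain ⟨n, rfl⟩ : ∃ n, m = n + 2 := ⟨m - 2, by omega⟩
  have hcycle := isCycle_finRotate (n := n)
  obtain ⟨x0, hx0, hall⟩ := hcycle
  have hnofix : ∀ y : Fin (n + 2), finRotate (n + 2) y ≠ y := by
    intro y
    have : y ∈ support (finRotate (n + 2)) := by
      rw [support_finRotate]; exact Finset.mem_univ y
    exact mem_support.mp this
  have hsub : Subsingleton (Quotient (scSetoid (finRotate (n + 2)))) := by
    constructor
    intro q1 q2
    obtain ⟨x, rfl⟩ := Quotient.exists_rep q1
    obtain ⟨y, rfl⟩ := Quotient.exists_rep q2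
    exact Quotient.sound (((hall (hnofix x)).symm.trans (hall (hnofix y))))
  have hinj : Function.Injective
      (fun _ : Quotient (scSetoid (finRotate (n + 2))) => (PUnit.unit : PUnit.{1})) := by
    intro a b _
    exact hsub.allEq a b
  calc nOrbits (finRotate (n + 2)) ≤ Nat.card PUnit.{1} := Nat.card_le_card_of_injective _ hinj
    _ = 1 := Nat.card_unique

lemma nOrbits_pairing_le (m : ℕ) (hm : 2 ≤ m) (hme : Even m) (t : Fin m → Fin m)
    (ht : Function.Involutive t) (ht' : ∀ u, t u ≠ u) :
    nOrbits (ht.toPerm t * finRotate m) ≤ m / 2 + 1 := by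
  classical
  set tP : Equiv.Perm (Fin m) := ht.toPerm t with htP
  have htPapp : ∀ x, tP x = t x := fun x => rfl
  obtain ⟨⟨l, hlp, hlc, hld⟩, -⟩ := Trunc.exists_rep tP.truncCycleFactors
  have hnodup : l.Nodup := Equiv.Perm.nodup_of_pairwise_disjoint_cycles hlc hld
  have hfinset : tP.cycleFactorsFinset = l.toFinset :=
    (Equiv.Perm.cycleFactorsFinset_eq_list_toFinset hnodup).mpr ⟨hlc, hld, hlp⟩
  -- every factor is a swap
  have hswap : ∀ g ∈ l, g.IsSwap := by
    intro g hg
    have hgmem : g ∈ tP.cycleFactorsFinset := by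
      rw [hfinset]; exact List.mem_toFinset.mpr hg
    obtain ⟨hc, hgt⟩ := Equiv.Perm.mem_cycleFactorsFinset_iff.mp hgmem
    obtain ⟨x, hgx, hall⟩ := hc
    have hxsupp : x ∈ g.support := mem_support.mpr hgx
    have hgx_eq : g x = t x := by rw [hgt x hxsupp, htPapp]
    have htx_supp : t x ∈ g.support := by
      rw [← hgx_eq]
      exact Equiv.Perm.apply_mem_support.mpr hxsupp
    have hgtx : g (t x) = x := by
      rw [hgt (t x) htx_supp, htPapp, ht x]
    have hpow : ∀ k : ℕ, (g ^ k) x = x ∨ (g ^ k) x = t x := by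
      intro k
      induction k with
      | zero => left; simp
      | succ i ihh =>
        have : (g ^ (i + 1)) x = g ((g ^ i) x) := by
          rw [pow_succ']; simp [Equiv.Perm.mul_apply]
        rw [this]
        rcases ihh with h | h
        · right; rw [h, hgx_eq]
        · left; rw [h, hgtx]
      -- support ⊆ {x, t x}
    have hsupp_sub : g.support ⊆ {x, t x} := by
      intro y hy
      have hsc : g.SameCycle x y := hall (mem_support.mp hy)
      obtain ⟨k, -, hk⟩ := hsc.exists_pow_eq'
      rcases hpow k with h | h <;> rw [hk] at h
      · rw [h]; exact Finset.mem_insert_self _ _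
      · rw [h]; exact Finset.mem_insert_of_mem (Finset.mem_singleton_self _)
    have hsupp_sup : ({x, t x} : Finset (Fin m)) ⊆ g.support := by
      intro y hy
      rcases Finset.mem_insert.mp hy with h | h
      · rw [h]; exact hxsupp
      · rw [Finset.mem_singleton.mp h]; exact htx_supp
    have hsupp_eq : g.support = {x, t x} := le_antisymm hsupp_sub hsupp_sup
    have hcard2 : g.support.card = 2 := by
      rw [hsupp_eq, Finset.card_pair (Ne.symm (ht' x))]
    exact Equiv.Perm.card_support_eq_two.mp hcard2
  -- length of the list
  have hsupptP : tP.support = Finset.univ := by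
    apply Finset.eq_univ_iff_forall.mpr
    intro x
    rw [mem_support, htPapp]
    exact ht' x
  have hm2 : m = 2 * l.length := by
    have h1 : tP.support.card = m := by rw [hsupptP, Finset.card_univ, Fintype.card_fin]
    have h2 := Equiv.Perm.card_support_prod_list_of_pairwise_disjoint hld
    rw [hlp] at h2
    have h3 : (l.map (Finset.card ∘ Equiv.Perm.support)).sum = 2 * l.length := by
      have h4 : l.map (Finset.card ∘ Equiv.Perm.support) = l.map (fun _ => 2) := by
        apply List.map_congr_left
        intro g hg
        exact Equiv.Perm.card_support_eq_two.mpr (hswap g hg)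
      rw [h4, List.map_const', List.sum_replicate, smul_eq_mul]
      ring
    omega
  -- the chain
  have hchain := nOrbits_le_list_swap l hswap (tP * finRotate m)
  have hprod : l.prod * (tP * finRotate m) = finRotate m := by
    rw [hlp, ← mul_assoc]
    have : tP * tP = 1 := by
      ext x
      simp [htPapp, ht x]
    rw [this, one_mul]
  rw [hprod] at hchain
  have := nOrbits_finRotate_le m hm
  omega

end RMT


open RMT in
/-- The one-cycle (`r = 1`) bound on sums of products of deterministic
matrix entries constrained by a pairing: `|∑_ψ ∏_l (D_l)_{ψ(-l), ψ(γ l)}| ≤ N^{m/2+1} ∏ ‖D_k‖`,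
where the pairing `τ` is encoded as the fixed-point-free involution `t` and the constraint
`ker ψ ≥ π_τ` reads `ψ(u) = ψ(-(t u))` for all `u`. Positive elements of `±[m]` are encoded
as `Sum.inl`, negative ones as `Sum.inr`, and `γ` is the full cycle `finRotate m`. -/
theorem det_sum_bound_one_cycle (m : ℕ) (hm : 2 ≤ m) (hme : Even m)
    (N : ℕ) (hN : 1 ≤ N) (D : Fin m → Matrix (Fin N) (Fin N) ℂ)
    (t : Fin m → Fin m) (ht : Function.Involutive t) (ht' : ∀ u, t u ≠ u) :
    ‖∑ ψ ∈ Finset.univ.filter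
        (fun ψ : (Fin m ⊕ Fin m) → Fin N => ∀ u, ψ (Sum.inl u) = ψ (Sum.inr (t u))),
        ∏ l : Fin m, D l (ψ (Sum.inr l)) (ψ (Sum.inl (finRotate m l)))‖ ≤
      (N : ℝ) ^ (m / 2 + 1) * ∏ k : Fin m, opNorm (D k) := by
  classical
  set σ0 : Equiv.Perm (Fin m) := ht.toPerm t * finRotate m with hσ0
  have hσ0app : ∀ l, σ0 l = t (finRotate m l) := fun l => rfl
  have hbij : (∑ ψ ∈ Finset.univ.filter
        (fun ψ : (Fin m ⊕ Fin m) → Fin N => ∀ u, ψ (Sum.inl u) = ψ (Sum.inr (t u))),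
        ∏ l : Fin m, D l (ψ (Sum.inr l)) (ψ (Sum.inl (finRotate m l)))) =
      ∑ φ : Fin m → Fin N, ∏ l, D l (φ l) (φ (σ0 l)) := by
    refine Finset.sum_nbij' (fun ψ => ψ ∘ Sum.inr)
      (fun φ => Sum.elim (fun u => φ (t u)) φ) ?_ ?_ ?_ ?_ ?_
    · intro ψ _
      exact Finset.mem_univ _
    · intro φ _
      refine Finset.mem_filter.mpr ⟨Finset.mem_univ _, fun u => rfl⟩
    · intro ψ hψ
      have hc := (Finset.mem_filter.mp hψ).2
      funext z
      cases z with
      | inl u => exact (hc u).symm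
      | inr u => rfl
    · intro φ _
      rfl
    · intro ψ hψ
      have hc := (Finset.mem_filter.mp hψ).2
      refine Finset.prod_congr rfl (fun l _ => ?_)
      rw [hσ0app]
      show D l (ψ (Sum.inr l)) (ψ (Sum.inl (finRotate m l))) =
        D l (ψ (Sum.inr l)) (ψ (Sum.inr (t (finRotate m l))))
      rw [hc (finRotate m l)]
  rw [hbij]
  have h1 := abstract_bound hN m (Fin m) (Fintype.card_fin m) σ0 D
  refine h1.trans ?_
  have h2 : nOrbits σ0 ≤ m / 2 + 1 := nOrbits_pairing_le m hm hme t ht ht'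
  refine mul_le_mul_of_nonneg_right ?_
    (Finset.prod_nonneg (fun l _ => opNorm_nonneg _))
  exact pow_le_pow_right₀ (by exact_mod_cast hN) h2
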